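/- Let k be a perfect field of characteristic p > 0, R = k[x_1,…,x_n], l ≥ 1, and let M, N be R-modules. Let f : M → F^{*l}(N) be an R-linear map, and write f(x) = Σ_ī e_ī ⊗ f_ī(x) for the unique expansion of f(x) in the basis {e_ī : 0 ≤ i_j ≤ p^l − 1}. If the top coordinate function f_{\overline{p^l−1}} is identically zero, then f is the zero map. -/

import Mathlib

open MvPolynomial TensorProduct

noncomputable section

/-- The target copy of `R = k[x₁,…,xₙ]`, regarded as an algebra over `R`
via the `l`-th iterate of the Frobenius, `φ_l : r ↦ r ^ (p ^ l)`. -/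
def FrobTarget (k : Type) [Field k] (n p l : ℕ) : Type := MvPolynomial (Fin n) k

instance (k : Type) [Field k] (n p l : ℕ) : CommRing (FrobTarget k n p l) :=
  inferInstanceAs (CommRing (MvPolynomial (Fin n) k))

/-- `φ_l : R → R`, `r ↦ r ^ (p ^ l)`, viewed as a ring homomorphism into the target copy. -/
def frobHom (k : Type) [Field k] (n p l : ℕ) [Fact p.Prime] [CharP k p] :
    MvPolynomial (Fin n) k →+* FrobTarget k n p l :=
  iterateFrobenius (MvPolynomial (Fin n) k) p l

instance (k : Type) [Field k] (n p l : ℕ) [Fact p.Prime] [CharP k p] :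
    Algebra (MvPolynomial (Fin n) k) (FrobTarget k n p l) :=
  (frobHom k n p l).toAlgebra

/-- The Frobenius base change `F^{*l}(N) = R ⊗_{φ_l} N`:  the tensor product in which the
left-hand copy of `R` is a right `R`-module via `φ_l`, with `R` acting through the left factor. -/
def Fstar (k : Type) [Field k] (n p l : ℕ) [Fact p.Prime] [CharP k p]
    (N : Type) [AddCommGroup N] [Module (MvPolynomial (Fin n) k) N] : Type :=
  FrobTarget k n p l ⊗[MvPolynomial (Fin n) k] N

instance (k : Type) [Field k] (n p l : ℕ) [Fact p.Prime] [CharP k p]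
    (N : Type) [AddCommGroup N] [Module (MvPolynomial (Fin n) k) N] :
    AddCommGroup (Fstar k n p l N) :=
  inferInstanceAs (AddCommGroup (FrobTarget k n p l ⊗[MvPolynomial (Fin n) k] N))

/-- `R` acts on `F^{*l}(N)` through the left factor. -/
instance (k : Type) [Field k] (n p l : ℕ) [Fact p.Prime] [CharP k p]
    (N : Type) [AddCommGroup N] [Module (MvPolynomial (Fin n) k) N] :
    Module (MvPolynomial (Fin n) k) (Fstar k n p l N) :=
  inferInstanceAs
    (Module (FrobTarget k n p l) (FrobTarget k n p l ⊗[MvPolynomial (Fin n) k] N))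

/-- The canonical identification of `R` with the target copy of `R`. -/
def toT (k : Type) [Field k] (n p l : ℕ) (r : MvPolynomial (Fin n) k) :
    FrobTarget k n p l := r

/-- Elementary tensors `b ⊗ y` in `F^{*l}(N)`. -/
def tensorMk (k : Type) [Field k] (n p l : ℕ) [Fact p.Prime] [CharP k p]
    (N : Type) [AddCommGroup N] [Module (MvPolynomial (Fin n) k) N]
    (b : FrobTarget k n p l) (y : N) : Fstar k n p l N :=
  b ⊗ₜ[MvPolynomial (Fin n) k] y

/-- The monomial `e_ī = x₁^{i₁} ⋯ xₙ^{iₙ}` in the target copy of `R`. -/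
def eMono (k : Type) [Field k] (n p l : ℕ) (v : Fin n → ℕ) : FrobTarget k n p l :=
  toT k n p l (∏ j, X j ^ v j)

/-- The degree-`d` component of `F^{*l}(N)` for a `ℤ`-graded module `N`:  the additive span of
the elementary tensors `r ⊗ y` with `r ∈ R_a`, `y ∈ N_b` and `a + p^l • b = d`. -/
def FstarGrade (k : Type) [Field k] (n p l : ℕ) [Fact p.Prime] [CharP k p]
    (N : Type) [AddCommGroup N] [Module (MvPolynomial (Fin n) k) N]
    (𝓝 : ℤ → AddSubgroup N) (d : ℤ) : AddSubgroup (Fstar k n p l N) :=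
  AddSubgroup.closure { z | ∃ (a : ℕ) (b : ℤ) (r : MvPolynomial (Fin n) k) (y : N),
    r ∈ homogeneousSubmodule (Fin n) k a ∧ y ∈ 𝓝 b ∧ (a : ℤ) + (p : ℤ) ^ l * b = d ∧
    z = tensorMk k n p l N (toT k n p l r) y }

/-- The top multi-index `(p^l − 1, …, p^l − 1)`. -/
def topIdx (n p l : ℕ) [Fact p.Prime] : Fin n → Fin (p ^ l) :=
  fun _ => ⟨p ^ l - 1, Nat.sub_lt (pow_pos (Fact.out : p.Prime).pos l) one_pos⟩

namespace Statement2Aux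

variable (k : Type) [Field k] [PerfectField k] (p : ℕ) [Fact p.Prime] [CharP k p] (n l : ℕ)

/-- Inverse of the `l`-th iterate of Frobenius on `k`. -/
def rt : k ≃+* k := (iterateFrobeniusEquiv k p l).symm

lemma rt_pow (a : k) : rt k p l (a ^ p ^ l) = a := by
  have : a ^ p ^ l = iterateFrobeniusEquiv k p l a := rfl
  rw [this, rt, RingEquiv.symm_apply_apply]

/-- Exponent multi-indices congruent to the top index mod `p^l`. -/
def good (d : Fin n →₀ ℕ) : Prop := ∀ j, d j % p ^ l = p ^ l - 1

instance (d : Fin n →₀ ℕ) : Decidable (good p n l d) :=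
  inferInstanceAs (Decidable (∀ j, d j % p ^ l = p ^ l - 1))

/-- Division of a multi-index by `p^l`. -/
def ediv (d : Fin n →₀ ℕ) : Fin n →₀ ℕ := d.mapRange (· / p ^ l) (Nat.zero_div _)

/-- The "top coefficient" projection `π : R → R`, semilinear over Frobenius. -/
def piAdd : MvPolynomial (Fin n) k →+ MvPolynomial (Fin n) k :=
  (Finsupp.liftAddHom fun d =>
    if good p n l d then
      (monomial (ediv p n l d)).toAddMonoidHom.comp ((rt k p l : k →+* k) : k →+ k)
    else 0).comp AddMonoidAlgebra.coeffAddEquiv.toAddMonoidHom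

lemma piAdd_monomial (d : Fin n →₀ ℕ) (a : k) :
    piAdd k p n l (monomial d a) =
      if good p n l d then monomial (ediv p n l d) (rt k p l a) else 0 := by
  show (Finsupp.liftAddHom _) (Finsupp.single d a) = _
  rw [Finsupp.liftAddHom_apply_single]
  split_ifs <;> rfl

lemma piAdd_frob_mul (r g : MvPolynomial (Fin n) k) :
    piAdd k p n l (r ^ p ^ l * g) = r * piAdd k p n l g := by
  have hq : 0 < p ^ l := pow_pos (Fact.out : p.Prime).pos l
  induction r using MvPolynomial.induction_on' with
  | add r1 r2 h1 h2 =>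
    rw [add_pow_char_pow, add_mul, map_add, h1, h2, add_mul]
  | monomial e a =>
    induction g using MvPolynomial.induction_on' with
    | add g1 g2 h1 h2 =>
      rw [mul_add, map_add, h1, h2, map_add, mul_add]
    | monomial d c =>
      rw [monomial_pow, monomial_mul, piAdd_monomial, piAdd_monomial]
      have hgood : good p n l (p ^ l • e + d) ↔ good p n l d := by
        unfold good
        apply forall_congr'
        intro j
        have : (p ^ l • e + d) j = p ^ l * e j + d j := by
          simp [Finsupp.add_apply, Finsupp.smul_apply]
        rw [this, Nat.mul_add_mod]
      by_cases hd : good p n l d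
      · rw [if_pos (hgood.mpr hd), if_pos hd]
        have hdiv : ediv p n l (p ^ l • e + d) = e + ediv p n l d := by
          ext j
          have : (p ^ l • e + d) j = p ^ l * e j + d j := by
            simp [Finsupp.add_apply, Finsupp.smul_apply]
          simp only [ediv, Finsupp.mapRange_apply, Finsupp.add_apply, this,
            Nat.mul_add_div hq]
        rw [hdiv, map_mul, rt_pow, monomial_mul]
      · rw [if_neg (fun h => hd (hgood.mp h)), if_neg hd, mul_zero]

/-- `π` as a linear map from the Frobenius twist. -/
def piLin : FrobTarget k n p l →ₗ[MvPolynomial (Fin n) k] MvPolynomial (Fin n) k where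
  toFun := piAdd k p n l
  map_add' := map_add _
  map_smul' := fun r g => by
    show piAdd k p n l (r • g : FrobTarget k n p l) = r * piAdd k p n l g
    rw [Algebra.smul_def, RingHom.algebraMap_toAlgebra]
    exact piAdd_frob_mul k p n l r g

variable (N : Type) [AddCommGroup N] [Module (MvPolynomial (Fin n) k) N]

/-- The additive projection `F^{*l}(N) → N` extracting the top coordinate. -/
def piN : (FrobTarget k n p l ⊗[MvPolynomial (Fin n) k] N)
    →ₗ[MvPolynomial (Fin n) k] N :=
  (TensorProduct.lid (MvPolynomial (Fin n) k) N).toLinearMap.comp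
    (LinearMap.rTensor N (piLin k p n l))

lemma piN_mk (b : FrobTarget k n p l) (y : N) :
    piN k p n l N (tensorMk k n p l N b y) = piAdd k p n l b • y := by
  show piN k p n l N (b ⊗ₜ y) = piAdd k p n l b • y
  simp only [piN, LinearMap.comp_apply, LinearMap.rTensor_tmul,
    LinearEquiv.coe_toLinearMap, TensorProduct.lid_tmul]
  rfl

lemma prod_X_pow (v : Fin n → ℕ) :
    (∏ j, X j ^ v j : MvPolynomial (Fin n) k)
      = monomial (Finsupp.equivFunOnFinite.symm v) 1 := by
  rw [← prod_X_pow_eq_monomial]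
  refine (Finset.prod_subset (Finset.subset_univ _) ?_).symm
  intro x _ hx
  have h0 : Finsupp.equivFunOnFinite.symm v x = 0 := Finsupp.notMem_support_iff.mp hx
  rw [show v x = Finsupp.equivFunOnFinite.symm v x from rfl, h0, pow_zero]

lemma piAdd_key (v w : Fin n → Fin (p ^ l)) :
    piAdd k p n l ((∏ j, X j ^ (p ^ l - 1 - (v j : ℕ))) * ∏ j, X j ^ (w j : ℕ))
      = if w = v then 1 else 0 := by
  have hq : 0 < p ^ l := pow_pos (Fact.out : p.Prime).pos l
  have hmul : (∏ j, X j ^ (p ^ l - 1 - (v j : ℕ)) : MvPolynomial (Fin n) k)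
      * ∏ j, X j ^ (w j : ℕ)
      = ∏ j, X j ^ ((p ^ l - 1 - (v j : ℕ)) + (w j : ℕ)) := by
    rw [← Finset.prod_mul_distrib]
    exact Finset.prod_congr rfl fun j _ => (pow_add _ _ _).symm
  rw [hmul, prod_X_pow, piAdd_monomial]
  set d := Finsupp.equivFunOnFinite.symm
    (fun j => (p ^ l - 1 - (v j : ℕ)) + (w j : ℕ)) with hdd
  have hd : ∀ j, d j = (p ^ l - 1 - (v j : ℕ)) + (w j : ℕ) := fun j => rfl
  by_cases hwv : w = v
  · subst hwv
    have hg : good p n l d := by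
      intro j
      have h1 : (w j : ℕ) < p ^ l := (w j).isLt
      rw [hd]
      have h2 : p ^ l - 1 - (w j : ℕ) + (w j : ℕ) = p ^ l - 1 := by omega
      rw [h2, Nat.mod_eq_of_lt (by omega)]
    rw [if_pos hg, if_pos rfl]
    have hdiv : ediv p n l d = 0 := by
      ext j
      have h1 : (w j : ℕ) < p ^ l := (w j).isLt
      show d j / p ^ l = 0
      rw [hd]
      exact Nat.div_eq_of_lt (by omega)
    rw [hdiv, map_one, monomial_zero', C_1]
  · have hg : ¬ good p n l d := by
      intro hgood
      apply hwv
      funext j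
      have hmod := hgood j
      rw [hd] at hmod
      have h1 : (v j : ℕ) < p ^ l := (v j).isLt
      have h2 : (w j : ℕ) < p ^ l := (w j).isLt
      by_cases hcase : (p ^ l - 1 - (v j : ℕ)) + (w j : ℕ) < p ^ l
      · rw [Nat.mod_eq_of_lt hcase] at hmod
        exact Fin.ext (by omega)
      · rw [Nat.mod_eq_sub_mod (le_of_not_gt hcase),
          Nat.mod_eq_of_lt (by omega)] at hmod
        exact Fin.ext (by omega)
    rw [if_neg hg, if_neg hwv]

lemma piAdd_e (w : Fin n → Fin (p ^ l)) :
    piAdd k p n l (∏ j, X j ^ (w j : ℕ))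
      = if w = topIdx n p l then 1 else 0 := by
  have h := piAdd_key k p n l (topIdx n p l) w
  have htop : ∀ j : Fin n, p ^ l - 1 - ((topIdx n p l j : ℕ)) = 0 := by
    intro j
    show p ^ l - 1 - (p ^ l - 1) = 0
    omega
  simp only [htop, pow_zero, Finset.prod_const_one, one_mul] at h
  exact h

end Statement2Aux
/-- Let `k` be a perfect field of characteristic `p > 0`,
`R = k[x₁,…,xₙ]`, `l ≥ 1`, and `M`, `N` `R`-modules.  Let `f : M → F^{*l}(N)` be `R`-linear
and write `f(x) = Σ_v e_v ⊗ f_v(x)` for the (unique) expansion of `f(x)` in the basis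
`{e_v}`.  If the top coordinate function `f_{(p^l−1,…,p^l−1)}` is identically zero,
then `f = 0`. -/
theorem statement2 (k : Type) [Field k] [PerfectField k] (p : ℕ) [Fact p.Prime] [CharP k p]
    (n l : ℕ) (hl : 1 ≤ l)
    (M N : Type) [AddCommGroup M] [Module (MvPolynomial (Fin n) k) M]
    [AddCommGroup N] [Module (MvPolynomial (Fin n) k) N]
    (f : M →ₗ[MvPolynomial (Fin n) k] Fstar k n p l N)
    (c : M → (Fin n → Fin (p ^ l)) → N)
    (hc : ∀ x : M, f x =
      ∑ v : Fin n → Fin (p ^ l),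
        tensorMk k n p l N (eMono k n p l fun j => (v j : ℕ)) (c x v))
    (htop : ∀ x : M, c x (topIdx n p l) = 0) :
    f = 0 := by
  classical
  have hcv : ∀ (x : M) (v : Fin n → Fin (p ^ l)), c x v = 0 := by
    intro x v
    set m : MvPolynomial (Fin n) k := ∏ j, X j ^ (p ^ l - 1 - (v j : ℕ)) with hm
    have hsmul : ∀ (b : FrobTarget k n p l) (y : N),
        m • tensorMk k n p l N b y = tensorMk k n p l N (toT k n p l m * b) y := by
      intro b y
      exact TensorProduct.smul_tmul' (toT k n p l m) b y
    have e1 : Statement2Aux.piN k p n l N (f (m • x)) = 0 := by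
      rw [hc (m • x)]
      erw [map_sum]
      have hterm : ∀ w : Fin n → Fin (p ^ l),
          Statement2Aux.piN k p n l N
            (tensorMk k n p l N (eMono k n p l fun j => (w j : ℕ)) (c (m • x) w))
          = (if w = topIdx n p l then (1 : MvPolynomial (Fin n) k) else 0) • c (m • x) w := by
        intro w
        rw [Statement2Aux.piN_mk]
        exact congrArg (· • c (m • x) w) (Statement2Aux.piAdd_e k p n l w)
      rw [Finset.sum_congr rfl fun w _ => hterm w]
      simp only [ite_smul, one_smul, zero_smul, Finset.sum_ite_eq', Finset.mem_univ, if_pos]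
      exact htop (m • x)
    have e2 : Statement2Aux.piN k p n l N (f (m • x)) = c x v := by
      rw [map_smul f m x, hc x, Finset.smul_sum]
      erw [map_sum]
      have hterm : ∀ w : Fin n → Fin (p ^ l),
          Statement2Aux.piN k p n l N
            (m • tensorMk k n p l N (eMono k n p l fun j => (w j : ℕ)) (c x w))
          = (if w = v then (1 : MvPolynomial (Fin n) k) else 0) • c x w := by
        intro w
        rw [hsmul, Statement2Aux.piN_mk]
        exact congrArg (· • c x w) (Statement2Aux.piAdd_key k p n l v w)
      rw [Finset.sum_congr rfl fun w _ => hterm w]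
      simp only [ite_smul, one_smul, zero_smul, Finset.sum_ite_eq', Finset.mem_univ, if_pos]
    rw [e1] at e2
    exact e2.symm
  apply LinearMap.ext
  intro x
  rw [hc x]
  simp only [hcv]
  show (∑ v : Fin n → Fin (p ^ l),
      (eMono k n p l fun j => (v j : ℕ)) ⊗ₜ[MvPolynomial (Fin n) k] (0 : N)) = 0
  simp [TensorProduct.tmul_zero]
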